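/- (Proposition 2, truncated tail) Let η > 0, δ > 0, t_k ∈ ℝ, x_z^k ∈ ℝ, C a positive integer, and let (v_i)_{i≥0} be a sequence of reals with v_i = 0 for all i ≥ C. Define the piecewise-linear ZMP trajectory x_z(t) = x_z^k + Σ_{i=0}^∞ (ρ(t − t_{k+i}) − ρ(t − t_{k+i+1})) v_i, where ρ(t) = max(t,0) and t_{k+i} = t_k + iδ, and set x_u^k = η ∫_{t_k}^∞ e^{−η(τ−t_k)} x_z(τ) dτ. Then: (a) Σ_{i=0}^{C−1} e^{−iηδ} v_i = (η/(1 − e^{−ηδ})) · (x_u^k − x_z^k) (the truncated-tail stability constraint); and (b) η ∫_{t_{k+C}}^∞ e^{−η(τ−t_{k+C})} x_z(τ) dτ = x_z(t_{k+C}) (the capturability terminal constraint). -/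

import Mathlib

open MeasureTheory Real


open Set Filter

lemma int_exp (η c a : ℝ) (hη : 0 < η) :
    IntegrableOn (fun τ : ℝ => Real.exp (-η * (τ - c))) (Set.Ioi a) := by
  have h : (fun τ : ℝ => Real.exp (-η * (τ - c)))
      = fun τ => Real.exp (η * c) * Real.exp (-η * τ) := by
    funext τ; rw [← Real.exp_add]; ring_nf
  rw [h]
  exact (exp_neg_integrableOn_Ioi a hη).const_mul _

lemma int_exp_val (η c a : ℝ) (hη : 0 < η) :
    ∫ τ in Set.Ioi a, Real.exp (-η * (τ - c)) = Real.exp (-η * (a - c)) / η := by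
  have hd : ∀ x ∈ Set.Ici a, HasDerivAt (fun τ => -(Real.exp (-η * (τ - c)) / η))
      (Real.exp (-η * (x - c))) x := by
    intro x _
    have h1 : HasDerivAt (fun τ : ℝ => -η * (τ - c)) (-η) x := by
      simpa using ((hasDerivAt_id x).sub_const c).const_mul (-η)
    have h2 := (h1.exp.div_const η).neg
    exact h2.congr_deriv (by rw [mul_neg, neg_div, neg_neg, mul_div_assoc, div_self hη.ne', mul_one])
  have hlim : Tendsto (fun τ => -(Real.exp (-η * (τ - c)) / η)) atTop (nhds 0) := by
    have h3 : Tendsto (fun τ : ℝ => -η * (τ - c)) atTop atBot := by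
      apply Tendsto.const_mul_atTop_of_neg (by linarith : -η < 0)
      exact tendsto_atTop_add_const_right _ (-c) tendsto_id
    have := (Real.tendsto_exp_atBot.comp h3).div_const η
    simpa using this.neg
  have := integral_Ioi_of_hasDerivAt_of_tendsto' hd (int_exp η c a hη) hlim
  rw [this]
  field_simp
  ring

lemma ramp_bounds (a b τ : ℝ) (h2 : a ≤ b) :
    0 ≤ max (τ - a) 0 - max (τ - b) 0 ∧ max (τ - a) 0 - max (τ - b) 0 ≤ b - a := by
  constructor
  · have : max (τ - b) 0 ≤ max (τ - a) 0 := max_le_max (by linarith) le_rfl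
    linarith
  · rcases le_total τ b with h | h
    · rw [max_eq_right (by linarith : τ - b ≤ 0)]
      have : max (τ - a) 0 ≤ b - a := max_le (by linarith) (by linarith)
      linarith
    · rw [max_eq_left (by linarith : 0 ≤ τ - b), max_eq_left (by linarith : 0 ≤ τ - a)]
      linarith

lemma ramp_integrable (η tk a b : ℝ) (hη : 0 < η) (h2 : a ≤ b) :
    IntegrableOn
      (fun τ : ℝ => Real.exp (-η * (τ - tk)) * (max (τ - a) 0 - max (τ - b) 0))
      (Set.Ioi tk) := by
  apply Integrable.mono' ((int_exp η tk tk hη).mul_const (b - a))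
  · apply Continuous.aestronglyMeasurable
    exact (Real.continuous_exp.comp (by continuity)).mul
      (((continuous_id.sub continuous_const).max continuous_const).sub
        ((continuous_id.sub continuous_const).max continuous_const))
  · filter_upwards with τ
    have hb := ramp_bounds a b τ h2
    rw [Real.norm_eq_abs, abs_mul, abs_of_pos (Real.exp_pos _), abs_of_nonneg hb.1]
    exact mul_le_mul_of_nonneg_left hb.2 (Real.exp_pos _).le

lemma ramp_val (η tk a b : ℝ) (hη : 0 < η) (h1 : tk ≤ a) (h2 : a ≤ b) :
    ∫ τ in Set.Ioi tk, Real.exp (-η * (τ - tk)) * (max (τ - a) 0 - max (τ - b) 0)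
      = (Real.exp (-η * (a - tk)) - Real.exp (-η * (b - tk))) / η ^ 2 := by
  have hne : η ≠ 0 := hη.ne'
  set f : ℝ → ℝ := fun τ => Real.exp (-η * (τ - tk)) * (max (τ - a) 0 - max (τ - b) 0) with hf
  -- split Ioi tk = Ioc tk a ∪ Ioi a
  have hsplit1 : Set.Ioc tk a ∪ Set.Ioi a = Set.Ioi tk := Set.Ioc_union_Ioi_eq_Ioi h1
  have hsplit2 : Set.Ioc a b ∪ Set.Ioi b = Set.Ioi a := Set.Ioc_union_Ioi_eq_Ioi h2
  have hdisj : ∀ x y : ℝ, Disjoint (Set.Ioc x y) (Set.Ioi y) := by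
    intro x y
    rw [Set.disjoint_left]
    rintro z ⟨_, hz1⟩ hz2
    exact absurd hz2 (not_lt.2 hz1)
  have hint : IntegrableOn f (Set.Ioi tk) := ramp_integrable η tk a b hη h2
  have hintA : IntegrableOn f (Set.Ioi a) := hint.mono (by rw [← hsplit1]; exact Set.subset_union_right) le_rfl
  have hintI1 : IntegrableOn f (Set.Ioc tk a) := hint.mono (by rw [← hsplit1]; exact Set.subset_union_left) le_rfl
  have hintI2 : IntegrableOn f (Set.Ioc a b) := hintA.mono (by rw [← hsplit2]; exact Set.subset_union_left) le_rfl
  have hintI3 : IntegrableOn f (Set.Ioi b) := hintA.mono (by rw [← hsplit2]; exact Set.subset_union_right) le_rfl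
  have e1 : ∫ τ in Set.Ioi tk, f τ = (∫ τ in Set.Ioc tk a, f τ) + ∫ τ in Set.Ioi a, f τ := by
    rw [← hsplit1, setIntegral_union (hdisj tk a) measurableSet_Ioi hintI1 hintA]
  have e2 : ∫ τ in Set.Ioi a, f τ = (∫ τ in Set.Ioc a b, f τ) + ∫ τ in Set.Ioi b, f τ := by
    rw [← hsplit2, setIntegral_union (hdisj a b) measurableSet_Ioi hintI2 hintI3]
  -- piece 1 : zero
  have p1 : ∫ τ in Set.Ioc tk a, f τ = 0 := by
    rw [setIntegral_congr_fun measurableSet_Ioc (g := fun _ => (0:ℝ))]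
    · simp
    · intro τ hτ
      simp only [f]
      rw [max_eq_right (by linarith [hτ.2] : τ - a ≤ 0),
        max_eq_right (by linarith [hτ.2] : τ - b ≤ 0)]
      ring
  -- piece 2 : FTC
  have p2 : ∫ τ in Set.Ioc a b, f τ
      = (-(Real.exp (-η * (b - tk)) * (η * (b - a) + 1) / η ^ 2)) - (-(Real.exp (-η * (a - tk)) * (η * (a - a) + 1) / η ^ 2)) := by
    have hcong : ∫ τ in Set.Ioc a b, f τ
        = ∫ τ in Set.Ioc a b, Real.exp (-η * (τ - tk)) * (τ - a) := by
      apply setIntegral_congr_fun measurableSet_Ioc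
      intro τ hτ
      simp only [f]
      rw [max_eq_left (by linarith [hτ.1] : 0 ≤ τ - a),
        max_eq_right (by linarith [hτ.2] : τ - b ≤ 0)]
      ring
    rw [hcong, ← intervalIntegral.integral_of_le h2]
    apply intervalIntegral.integral_eq_sub_of_hasDerivAt
    · intro x _
      have hA : HasDerivAt (fun τ : ℝ => -η * (τ - tk)) (-η) x := by
        simpa using ((hasDerivAt_id x).sub_const tk).const_mul (-η)
      have hL : HasDerivAt (fun τ : ℝ => η * (τ - a) + 1) η x := by
        simpa using (((hasDerivAt_id x).sub_const a).const_mul η).add_const 1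
      have := ((hA.exp.mul hL).div_const (η ^ 2)).neg
      convert this using 1
      · funext y; simp [Pi.mul_apply]
      rw [eq_comm, neg_eq_iff_eq_neg, div_eq_iff (pow_ne_zero 2 hne)]
      ring
    · exact ((Real.continuous_exp.comp (by continuity)).mul
        (continuous_id.sub continuous_const)).intervalIntegrable a b
  -- piece 3 : constant tail
  have p3 : ∫ τ in Set.Ioi b, f τ = Real.exp (-η * (b - tk)) / η * (b - a) := by
    have hcong : ∫ τ in Set.Ioi b, f τ
        = ∫ τ in Set.Ioi b, Real.exp (-η * (τ - tk)) * (b - a) := by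
      apply setIntegral_congr_fun measurableSet_Ioi
      intro τ hτ
      simp only [f]
      rw [max_eq_left (by simp only [Set.mem_Ioi] at hτ; linarith : 0 ≤ τ - a),
        max_eq_left (by simp only [Set.mem_Ioi] at hτ; linarith : 0 ≤ τ - b)]
      ring
    rw [hcong, integral_mul_const _, int_exp_val η tk b hη]
  rw [e1, e2, p1, p2, p3]
  field_simp
  ring

/-- Proposition 2, truncated tail: if the ZMP velocity samples vanish after
the control horizon (`v_i = 0` for `i ≥ C`), then
(a) `Σ_{i=0}^{C−1} e^{−iηδ} v_i = (η/(1 − e^{−ηδ})) (x_u^k − x_z^k)` (stability constraint),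
and (b) `η ∫_{t_{k+C}}^∞ e^{−η(τ−t_{k+C})} x_z(τ) dτ = x_z(t_{k+C})` (capturability). -/
theorem stmt_9 (η δ tk xzk : ℝ) (hη : 0 < η) (hδ : 0 < δ)
    (C : ℕ) (hC : 0 < C)
    (v : ℕ → ℝ) (hv : ∀ i, C ≤ i → v i = 0)
    (xz : ℝ → ℝ)
    (hxz : ∀ t, xz t = xzk + ∑' i : ℕ,
      (max (t - (tk + i * δ)) 0 - max (t - (tk + (i + 1) * δ)) 0) * v i)
    (xuk : ℝ)
    (hxuk : xuk = η * ∫ τ in Set.Ioi tk, Real.exp (-η * (τ - tk)) * xz τ) :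
    (∑ i ∈ Finset.range C, Real.exp (-(i : ℝ) * η * δ) * v i
        = η / (1 - Real.exp (-η * δ)) * (xuk - xzk)) ∧
    (η * ∫ τ in Set.Ioi (tk + C * δ), Real.exp (-η * (τ - (tk + C * δ))) * xz τ
        = xz (tk + C * δ)) := by
  have hne : η ≠ 0 := hη.ne'
  have hq : Real.exp (-η * δ) < 1 := by
    rw [Real.exp_lt_one_iff]
    nlinarith
  have hq' : (1 : ℝ) - Real.exp (-η * δ) ≠ 0 := by linarith
  -- finite-sum form of xz
  have hxz' : ∀ t, xz t = xzk + ∑ i ∈ Finset.range C,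
      (max (t - (tk + i * δ)) 0 - max (t - (tk + (i + 1) * δ)) 0) * v i := by
    intro t
    rw [hxz t]
    congr 1
    apply tsum_eq_sum
    intro i hi
    rw [hv i (by simpa using hi), mul_zero]
  have hab : ∀ i : ℕ, tk + (i : ℝ) * δ ≤ tk + ((i : ℝ) + 1) * δ := by
    intro i; nlinarith
  have hta : ∀ i : ℕ, tk ≤ tk + (i : ℝ) * δ := by
    intro i
    have : (0:ℝ) ≤ (i:ℝ) * δ := mul_nonneg (Nat.cast_nonneg i) hδ.le
    linarith
  -- part (a)
  have hIi : ∀ i : ℕ, IntegrableOn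
      (fun τ : ℝ => Real.exp (-η * (τ - tk)) *
        (max (τ - (tk + i * δ)) 0 - max (τ - (tk + (i + 1) * δ)) 0) * v i) (Set.Ioi tk) :=
    fun i => (ramp_integrable η tk (tk + i * δ) (tk + (i + 1) * δ) hη (hab i)).mul_const (v i)
  have hJ : ∫ τ in Set.Ioi tk, Real.exp (-η * (τ - tk)) * xz τ
      = xzk / η + ∑ i ∈ Finset.range C,
        (Real.exp (-η * ((i : ℝ) * δ)) - Real.exp (-η * (((i : ℝ) + 1) * δ))) / η ^ 2 * v i := by
    have hcong : ∫ τ in Set.Ioi tk, Real.exp (-η * (τ - tk)) * xz τ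
        = ∫ τ in Set.Ioi tk, (Real.exp (-η * (τ - tk)) * xzk + ∑ i ∈ Finset.range C,
            Real.exp (-η * (τ - tk)) *
              (max (τ - (tk + i * δ)) 0 - max (τ - (tk + (i + 1) * δ)) 0) * v i) := by
      apply setIntegral_congr_fun measurableSet_Ioi
      intro τ _
      dsimp only
      rw [hxz' τ, mul_add, Finset.mul_sum]
      congr 1
      exact Finset.sum_congr rfl fun i _ => (mul_assoc _ _ _).symm
    rw [hcong, integral_add ((int_exp η tk tk hη).mul_const xzk)
        (integrable_finset_sum _ fun i _ => hIi i), integral_finset_sum _ fun i _ => hIi i]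
    congr 1
    · rw [integral_mul_const _, int_exp_val η tk tk hη]
      simp only [sub_self, mul_zero, neg_zero, Real.exp_zero]
      rw [div_mul_eq_mul_div, one_mul]
    · apply Finset.sum_congr rfl
      intro i _
      rw [integral_mul_const _, ramp_val η tk (tk + i * δ) (tk + (i + 1) * δ) hη (hta i) (hab i)]
      congr 3 <;> ring
  constructor
  · rw [hxuk, hJ, mul_add, mul_div_cancel₀ _ hne]
    rw [add_sub_cancel_left, Finset.mul_sum, Finset.mul_sum]
    apply Finset.sum_congr rfl
    intro i _
    have he1 : -η * (((i : ℝ) + 1) * δ) = -η * ((i : ℝ) * δ) + -η * δ := by ring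
    have he2 : -(i : ℝ) * η * δ = -η * ((i : ℝ) * δ) := by ring
    rw [he1, Real.exp_add, he2]
    have aux : ∀ q E V : ℝ, 1 - q ≠ 0 →
        E * V = η / (1 - q) * (η * ((E - E * q) / η ^ 2 * V)) := by
      intro q E V hq0
      rw [div_mul_eq_mul_div, eq_div_iff hq0]
      field_simp
    exact aux _ _ _ hq'
  · -- part (b)
    set T : ℝ := tk + C * δ with hT
    have hconst : ∀ τ : ℝ, T ≤ τ → xz τ = xzk + ∑ i ∈ Finset.range C, δ * v i := by
      intro τ hτ
      rw [hxz' τ]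
      congr 1
      apply Finset.sum_congr rfl
      intro i hi
      have hiC : (i : ℝ) + 1 ≤ (C : ℝ) := by
        have : i + 1 ≤ C := Finset.mem_range.1 hi
        exact_mod_cast this
      have h1 : tk + ((i : ℝ) + 1) * δ ≤ T := by
        rw [hT]
        nlinarith
      have h0 : tk + (i : ℝ) * δ ≤ T := le_trans (hab i) h1
      rw [max_eq_left (by linarith : (0:ℝ) ≤ τ - (tk + i * δ)),
        max_eq_left (by linarith : (0:ℝ) ≤ τ - (tk + (i + 1) * δ))]
      ring_nf
    have hxzT : xz T = xzk + ∑ i ∈ Finset.range C, δ * v i := hconst T le_rfl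
    have hcong : ∫ τ in Set.Ioi T, Real.exp (-η * (τ - T)) * xz τ
        = ∫ τ in Set.Ioi T, Real.exp (-η * (τ - T)) * xz T := by
      apply setIntegral_congr_fun measurableSet_Ioi
      intro τ hτ
      dsimp only
      rw [hconst τ (le_of_lt hτ), hxzT]
    rw [hcong, integral_mul_const _, int_exp_val η T T hη]
    simp only [sub_self, mul_zero, neg_zero, Real.exp_zero]
    field_simp
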